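/- Let k be an algebraically closed field, G a group, and M a finite-dimensional representation of G over k that is self-dual, i.e., G-equivariantly isomorphic to its dual representation M*. Let r and t be integers with 0 ≤ t ≤ r and r − t even. If t ≥ 1, or if the image of dim_k M in k is nonzero, then M^{⊗t} is a direct summand of M^{⊗r} as representations of G: there exist G-equivariant linear maps ι : M^{⊗t} → M^{⊗r} and π : M^{⊗r} → M^{⊗t} with π ∘ ι = id. -/

import Mathlib

open TensorProduct

namespace Stmt2Aux

open PiTensorProduct

variable {k : Type*} [Field k] {M : Type*} [AddCommGroup M] [Module k M]

noncomputable def oneE : (⨂[k]^1 M) ≃ₗ[k] M := subsingletonEquiv 0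

noncomputable def twoE : (⨂[k]^2 M) ≃ₗ[k] M ⊗[k] M :=
  (reindex k (fun _ : Fin 1 ⊕ Fin 1 => M) finSumFinEquiv).symm ≪≫ₗ
    (tmulEquiv k M).symm ≪≫ₗ TensorProduct.congr oneE oneE

lemma twoE_tprod (f : Fin 2 → M) : twoE (tprod k f) = f 0 ⊗ₜ[k] f 1 := by
  simp only [twoE, LinearEquiv.trans_apply, reindex_symm, reindex_tprod,
    Equiv.symm_symm, tmulEquiv_symm_apply, congr_tmul, oneE, subsingletonEquiv_apply_tprod,
    finSumFinEquiv_apply_left, finSumFinEquiv_apply_right]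
  congr 1 <;> exact congrArg f (by decide)

noncomputable def SPLIT (n : ℕ) : (⨂[k]^(n+2) M) ≃ₗ[k] (⨂[k]^n M) ⊗[k] (M ⊗[k] M) :=
  (reindex k (fun _ : Fin n ⊕ Fin 2 => M) finSumFinEquiv).symm ≪≫ₗ
    (tmulEquiv k M).symm ≪≫ₗ TensorProduct.congr (LinearEquiv.refl k _) twoE

lemma SPLIT_tprod (n : ℕ) (f : Fin (n+2) → M) :
    SPLIT n (tprod k f) = (tprod k fun i : Fin n => f (Fin.castAdd 2 i)) ⊗ₜ[k]
      (f (Fin.natAdd n 0) ⊗ₜ[k] f (Fin.natAdd n 1)) := by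
  simp only [SPLIT, LinearEquiv.trans_apply, reindex_symm, reindex_tprod,
    Equiv.symm_symm, tmulEquiv_symm_apply, congr_tmul, LinearEquiv.refl_apply, twoE_tprod,
    finSumFinEquiv_apply_left, finSumFinEquiv_apply_right]

def ext2 {n : ℕ} (x : Fin n → M) (v w : M) : Fin (n + 2) → M :=
  Sum.elim x ![v, w] ∘ finSumFinEquiv.symm

lemma ext2_castAdd {n : ℕ} (x : Fin n → M) (v w : M) (j : Fin n) :
    ext2 x v w (Fin.castAdd 2 j) = x j := by
  simp [ext2, finSumFinEquiv_symm_apply_castAdd]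

lemma ext2_natAdd0 {n : ℕ} (x : Fin n → M) (v w : M) :
    ext2 x v w (Fin.natAdd n 0) = v := by
  simp [ext2, finSumFinEquiv_symm_apply_natAdd]

lemma ext2_natAdd1 {n : ℕ} (x : Fin n → M) (v w : M) :
    ext2 x v w (Fin.natAdd n 1) = w := by
  simp [ext2, finSumFinEquiv_symm_apply_natAdd]

lemma SPLIT_symm_tmul (n : ℕ) (x : Fin n → M) (v w : M) :
    (SPLIT n).symm ((tprod k x) ⊗ₜ[k] (v ⊗ₜ[k] w)) = tprod k (ext2 x v w) := by
  rw [LinearEquiv.symm_apply_eq, SPLIT_tprod]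
  rw [show (fun i : Fin n => ext2 x v w (Fin.castAdd 2 i)) = x from
    funext fun i => ext2_castAdd x v w i, ext2_natAdd0, ext2_natAdd1]

lemma SPLIT_comm (n : ℕ) (f : M →ₗ[k] M) :
    (SPLIT n).toLinearMap ∘ₗ PiTensorProduct.map (fun _ => f)
      = (TensorProduct.map (PiTensorProduct.map (fun _ => f)) (TensorProduct.map f f)) ∘ₗ
        (SPLIT (M := M) n).toLinearMap := by
  apply PiTensorProduct.ext
  apply MultilinearMap.ext
  intro x
  simp [map_tprod, SPLIT_tprod]

noncomputable def contractLast (n : ℕ) (F : M ⊗[k] M →ₗ[k] k) :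
    (⨂[k]^(n+2) M) →ₗ[k] ⨂[k]^n M :=
  TensorProduct.lift (((LinearMap.lsmul k (⨂[k]^n M)).comp F).flip) ∘ₗ
    (SPLIT (M := M) n).toLinearMap

lemma contractLast_tprod (n : ℕ) (F : M ⊗[k] M →ₗ[k] k) (f : Fin (n+2) → M) :
    contractLast n F (tprod k f)
      = F (f (Fin.natAdd n 0) ⊗ₜ[k] f (Fin.natAdd n 1)) •
          tprod k (fun i : Fin n => f (Fin.castAdd 2 i)) := by
  simp [contractLast, SPLIT_tprod]

lemma contractLast_map (n : ℕ) (F : M ⊗[k] M →ₗ[k] k) (f : M →ₗ[k] M)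
    (hF : ∀ v w : M, F ((f v) ⊗ₜ[k] (f w)) = F (v ⊗ₜ[k] w)) :
    contractLast n F ∘ₗ PiTensorProduct.map (fun _ => f)
      = PiTensorProduct.map (fun _ => f) ∘ₗ contractLast n F := by
  apply PiTensorProduct.ext
  apply MultilinearMap.ext
  intro x
  simp [map_tprod, contractLast_tprod, hF]

noncomputable def insertPair (n : ℕ) (c : M ⊗[k] M) :
    (⨂[k]^n M) →ₗ[k] ⨂[k]^(n+2) M :=
  (SPLIT (M := M) n).symm.toLinearMap ∘ₗ
    (TensorProduct.mk k (⨂[k]^n M) (M ⊗[k] M)).flip c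

lemma insertPair_tprod (n : ℕ) (c : M ⊗[k] M) (x : Fin n → M) :
    insertPair n c (tprod k x) = (SPLIT n).symm ((tprod k x) ⊗ₜ[k] c) := by
  simp [insertPair]

lemma insertPair_map (n : ℕ) (c : M ⊗[k] M) (f : M →ₗ[k] M)
    (hc : TensorProduct.map f f c = c) :
    insertPair n c ∘ₗ PiTensorProduct.map (fun _ => f)
      = PiTensorProduct.map (fun _ => f) ∘ₗ insertPair n c := by
  apply PiTensorProduct.ext
  apply MultilinearMap.ext
  intro x
  apply (SPLIT n).injective
  have h1 := LinearMap.congr_fun (SPLIT_comm n f)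
    ((SPLIT n).symm ((tprod k x) ⊗ₜ[k] c))
  simp only [LinearMap.coe_comp, Function.comp_apply, LinearEquiv.coe_coe] at h1 ⊢
  simp only [LinearMap.compMultilinearMap_apply, LinearMap.coe_comp, Function.comp_apply,
    map_tprod, insertPair_tprod]
  rw [h1, LinearEquiv.apply_symm_apply, LinearEquiv.apply_symm_apply,
    TensorProduct.map_tmul, hc, map_tprod]

end Stmt2Aux

namespace Stmt2Aux

open PiTensorProduct

variable {k : Type*} [Field k] {M : Type*} [AddCommGroup M] [Module k M]
  [FiniteDimensional k M] {G : Type*} [Group G]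

lemma step (ρ : Representation k G M) (e : M ≃ₗ[k] Module.Dual k M)
    (he : ∀ (g : G) (v : M), e (ρ g v) = (e v) ∘ₗ (ρ g⁻¹))
    (n : ℕ) (hn : 1 ≤ n ∨ (Module.finrank k M : k) ≠ 0) :
    ∃ (s : (⨂[k]^n M) →ₗ[k] ⨂[k]^(n+2) M) (p : (⨂[k]^(n+2) M) →ₗ[k] ⨂[k]^n M),
      (∀ g : G, s ∘ₗ PiTensorProduct.map (fun _ => ρ g)
          = PiTensorProduct.map (fun _ => ρ g) ∘ₗ s) ∧
      (∀ g : G, p ∘ₗ PiTensorProduct.map (fun _ => ρ g)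
          = PiTensorProduct.map (fun _ => ρ g) ∘ₗ p) ∧
      p ∘ₗ s = LinearMap.id := by
  classical
  set d := Module.finrank k M with hd
  let b : Module.Basis (Fin d) k M := Module.finBasis k M
  have hρ1 : ∀ (g : G) (x : M), ρ g (ρ g⁻¹ x) = x := by
    intro g x
    rw [← Module.End.mul_apply, ← _root_.map_mul, mul_inv_cancel, _root_.map_one, Module.End.one_apply]
  have hρ2 : ∀ (g : G) (x : M), ρ g⁻¹ (ρ g x) = x := by
    intro g x
    rw [← Module.End.mul_apply, ← _root_.map_mul, inv_mul_cancel, _root_.map_one, Module.End.one_apply]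
  let eBil : M ⊗[k] M →ₗ[k] k := TensorProduct.lift e.toLinearMap
  have eBil_tmul : ∀ v w : M, eBil (v ⊗ₜ[k] w) = e v w := fun v w => rfl
  have hB : ∀ (g : G) (v w : M), eBil ((ρ g v) ⊗ₜ[k] (ρ g w)) = eBil (v ⊗ₜ[k] w) := by
    intro g v w
    rw [eBil_tmul, eBil_tmul, he g v]
    simp [hρ2]
  have hsymm : ∀ (g : G) (φ : Module.Dual k M),
      ρ g (e.symm φ) = e.symm (φ ∘ₗ (ρ g⁻¹ : M →ₗ[k] M)) := by
    intro g φ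
    apply e.injective
    rw [he g (e.symm φ), e.apply_symm_apply, e.apply_symm_apply]
  let cM : M ⊗[k] M := ∑ i, b i ⊗ₜ[k] e.symm (b.coord i)
  have hcM : ∀ g : G, TensorProduct.map (ρ g) (ρ g) cM = cM := by
    intro g
    have key : ∑ i, (b.coord i ∘ₗ (ρ g⁻¹ : M →ₗ[k] M)) ⊗ₜ[k] (ρ g (b i))
        = ∑ i, (b.coord i : Module.Dual k M) ⊗ₜ[k] b i := by
      apply (dualTensorHomEquivOfBasis (N := M) b).injective
      simp only [map_sum, dualTensorHomEquivOfBasis_apply]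
      apply LinearMap.ext; intro v
      simp only [LinearMap.coe_sum, Finset.sum_apply, dualTensorHom_apply,
        LinearMap.coe_comp, Function.comp_apply]
      have h2 : ∑ i, b.coord i v • b i = v := by
        simp only [Module.Basis.coord_apply]; exact b.sum_repr v
      rw [h2]
      calc ∑ i, b.coord i ((ρ g⁻¹) v) • ρ g (b i)
          = ρ g (∑ i, b.coord i ((ρ g⁻¹) v) • b i) := by
            rw [map_sum]; simp_rw [map_smul]
        _ = ρ g ((ρ g⁻¹) v) := by
            rw [show ∑ i, b.coord i ((ρ g⁻¹) v) • b i = (ρ g⁻¹) v from by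
              simp only [Module.Basis.coord_apply]; exact b.sum_repr _]
        _ = v := hρ1 g v
    let Ψ : Module.Dual k M ⊗[k] M →ₗ[k] M ⊗[k] M :=
      TensorProduct.map LinearMap.id e.symm.toLinearMap ∘ₗ
        (TensorProduct.comm k (Module.Dual k M) M).toLinearMap
    have hΨ : ∀ (φ : Module.Dual k M) (v : M), Ψ (φ ⊗ₜ[k] v) = v ⊗ₜ[k] e.symm φ :=
      fun φ v => rfl
    have hkey2 := congrArg Ψ key
    simp only [map_sum, hΨ] at hkey2
    calc TensorProduct.map (ρ g) (ρ g) cM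
        = ∑ i, (ρ g (b i)) ⊗ₜ[k] (ρ g (e.symm (b.coord i))) := by
          simp [cM, map_sum]
      _ = ∑ i, (ρ g (b i)) ⊗ₜ[k] e.symm (b.coord i ∘ₗ (ρ g⁻¹ : M →ₗ[k] M)) := by
          simp_rw [hsymm]
      _ = cM := hkey2
  refine ⟨insertPair n cM, ?_⟩
  rcases hn with hn | hdk
  · -- zigzag branch, n = m + 1
    obtain ⟨m, rfl⟩ : ∃ m, n = m + 1 := ⟨n - 1, by omega⟩
    let a0 : Fin (m+3) := ⟨m, by omega⟩
    let a1 : Fin (m+3) := ⟨m+1, by omega⟩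
    let a2 : Fin (m+3) := ⟨m+2, by omega⟩
    have ha01 : a0 ≠ a1 := by simp [a0, a1, Fin.ext_iff]
    have ha02 : a0 ≠ a2 := by simp [a0, a2, Fin.ext_iff]
    have ha12 : a1 ≠ a2 := by simp [a1, a2, Fin.ext_iff]
    let σ : Equiv.Perm (Fin (m+3)) := (Equiv.swap a0 a1).trans (Equiv.swap a1 a2)
    have hσ0 : σ a0 = a2 := by
      show (Equiv.swap a1 a2) ((Equiv.swap a0 a1) a0) = a2
      rw [Equiv.swap_apply_left, Equiv.swap_apply_left]
    have hσ1 : σ a1 = a0 := by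
      show (Equiv.swap a1 a2) ((Equiv.swap a0 a1) a1) = a0
      rw [Equiv.swap_apply_right, Equiv.swap_apply_of_ne_of_ne ha01 ha02]
    have hσ2 : σ a2 = a1 := by
      show (Equiv.swap a1 a2) ((Equiv.swap a0 a1) a2) = a1
      rw [Equiv.swap_apply_of_ne_of_ne ha02.symm ha12.symm, Equiv.swap_apply_right]
    have hσlow : ∀ j : Fin (m+3), (j : ℕ) < m → σ j = j := by
      intro j hj
      have h0 : j ≠ a0 := by simp [a0, Fin.ext_iff]; omega
      have h1 : j ≠ a1 := by simp [a1, Fin.ext_iff]; omega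
      have h2 : j ≠ a2 := by simp [a2, Fin.ext_iff]; omega
      show (Equiv.swap a1 a2) ((Equiv.swap a0 a1) j) = j
      rw [Equiv.swap_apply_of_ne_of_ne h0 h1, Equiv.swap_apply_of_ne_of_ne h1 h2]
    let p : (⨂[k]^(m+1+2) M) →ₗ[k] ⨂[k]^(m+1) M :=
      contractLast (m+1) eBil ∘ₗ
        (reindex k (fun _ : Fin (m+3) => M) σ.symm).toLinearMap
    refine ⟨p, fun g => insertPair_map _ _ _ (hcM g), fun g => ?_, ?_⟩
    · -- p equivariance
      apply LinearMap.ext; intro y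
      have h1 := contractLast_map (m+1) eBil (ρ g) (fun v w => hB g v w)
      simp only [p, LinearMap.comp_apply, LinearEquiv.coe_coe]
      rw [show (reindex k (fun _ : Fin (m+3) => M) σ.symm)
            (PiTensorProduct.map (fun _ => ρ g) y)
          = PiTensorProduct.map (fun _ => ρ g)
            ((reindex k (fun _ : Fin (m+3) => M) σ.symm) y) from
        (map_reindex (fun _ => ρ g) σ.symm y).symm]
      exact LinearMap.congr_fun h1 _
    · -- p ∘ s = id
      apply PiTensorProduct.ext; apply MultilinearMap.ext; intro x
      simp only [LinearMap.compMultilinearMap_apply, LinearMap.comp_apply,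
        LinearMap.id_coe, id_eq]
      rw [insertPair_tprod]
      have hsum : (tprod k x) ⊗ₜ[k] cM
          = ∑ i, (tprod k x) ⊗ₜ[k] (b i ⊗ₜ[k] e.symm (b.coord i)) := tmul_sum _ _ _
      rw [hsum, map_sum, map_sum]
      have hterm : ∀ i, p ((SPLIT (m+1)).symm
            ((tprod k x) ⊗ₜ[k] (b i ⊗ₜ[k] e.symm (b.coord i))))
          = (e (x (Fin.last m)) (b i)) •
              tprod k (Function.update x (Fin.last m) (e.symm (b.coord i))) := by
        intro i
        rw [SPLIT_symm_tmul]
        simp only [p, LinearMap.comp_apply, LinearEquiv.coe_coe, reindex_tprod,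
          Equiv.symm_symm]
        simp only [contractLast_tprod]
        congr 1
        · -- scalar
          rw [show Fin.natAdd (m+1) (0 : Fin 2) = a1 from by simp [a1, Fin.ext_iff],
            show Fin.natAdd (m+1) (1 : Fin 2) = a2 from by simp [a2, Fin.ext_iff], hσ1, hσ2,
            show a0 = Fin.castAdd 2 (Fin.last m) from by simp [a0, Fin.ext_iff],
            show a1 = Fin.natAdd (m+1) (0 : Fin 2) from by simp [a1, Fin.ext_iff],
            ext2_castAdd, ext2_natAdd0, eBil_tmul]
        · -- tuple
          refine congrArg (⇑(PiTensorProduct.tprod k)) (funext fun j => ?_)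
          rcases eq_or_ne j (Fin.last m) with rfl | hj
          · rw [show Fin.castAdd 2 (Fin.last m) = a0 from Fin.val_injective (by simp [a0]), hσ0,
              show a2 = Fin.natAdd (m+1) (1 : Fin 2) from by simp [a2, Fin.ext_iff],
              ext2_natAdd1, Function.update_self]
          · have hvm : (j : ℕ) ≠ m := fun hc =>
              hj (Fin.val_injective (by simp [Fin.val_last, hc]))
            have hjm : (j : ℕ) < m := by
              have := j.isLt
              omega
            rw [show σ (Fin.castAdd 2 j) = Fin.castAdd 2 j from hσlow _ (by simpa),
              ext2_castAdd, Function.update_of_ne hj]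
      simp_rw [hterm]
      have hlin : ∀ z : M, tprod k (Function.update x (Fin.last m) z)
          = (MultilinearMap.toLinearMap (tprod (R := k) (s := fun _ : Fin (m+1) => M))
              x (Fin.last m)) z := fun z => rfl
      simp_rw [hlin, ← map_smul, ← map_sum]
      rw [Module.Basis.sum_dual_apply_smul_coord, e.symm_apply_apply]
      show tprod k (Function.update x (Fin.last m) (x (Fin.last m))) = tprod k x
      rw [Function.update_eq_self]
  · -- trace branch
    let eSw : M ⊗[k] M →ₗ[k] k := eBil ∘ₗ (TensorProduct.comm k M M).toLinearMap
    have eSw_tmul : ∀ v w : M, eSw (v ⊗ₜ[k] w) = e w v := fun v w => rfl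
    let p : (⨂[k]^(n+2) M) →ₗ[k] ⨂[k]^n M := ((d : k)⁻¹) • contractLast n eSw
    refine ⟨p, fun g => insertPair_map _ _ _ (hcM g), fun g => ?_, ?_⟩
    · have h1 := contractLast_map n eSw (ρ g)
        (fun v w => by rw [eSw_tmul, eSw_tmul, ← eBil_tmul, ← eBil_tmul, hB])
      simp only [p, LinearMap.smul_comp, LinearMap.comp_smul, h1]
    · apply PiTensorProduct.ext; apply MultilinearMap.ext; intro x
      simp only [LinearMap.compMultilinearMap_apply, LinearMap.comp_apply,
        LinearMap.id_coe, id_eq]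
      rw [insertPair_tprod]
      have hsum : (tprod k x) ⊗ₜ[k] cM
          = ∑ i, (tprod k x) ⊗ₜ[k] (b i ⊗ₜ[k] e.symm (b.coord i)) := tmul_sum _ _ _
      rw [hsum, map_sum]
      have hterm : ∀ i, contractLast n eSw ((SPLIT n).symm
            ((tprod k x) ⊗ₜ[k] (b i ⊗ₜ[k] e.symm (b.coord i)))) = tprod k x := by
        intro i
        rw [SPLIT_symm_tmul, contractLast_tprod, ext2_natAdd0, ext2_natAdd1, eSw_tmul]
        rw [show (fun j : Fin n => ext2 x (b i) (e.symm (b.coord i)) (Fin.castAdd 2 j)) = x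
          from funext fun j => ext2_castAdd _ _ _ j]
        rw [e.apply_symm_apply]
        simp [Module.Basis.coord_apply, Module.Basis.repr_self]
      simp only [p, LinearMap.smul_apply, map_sum, hterm, Finset.sum_const,
        Finset.card_univ, Fintype.card_fin]
      rw [← Nat.cast_smul_eq_nsmul k, smul_smul, mul_inv_cancel₀ hdk, one_smul]

lemma iter (ρ : Representation k G M) (e : M ≃ₗ[k] Module.Dual k M)
    (he : ∀ (g : G) (v : M), e (ρ g v) = (e v) ∘ₗ (ρ g⁻¹))
    (t : ℕ) (ht : 1 ≤ t ∨ (Module.finrank k M : k) ≠ 0) (m : ℕ) :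
    ∃ (s : (⨂[k]^t M) →ₗ[k] ⨂[k]^(t+2*m) M) (p : (⨂[k]^(t+2*m) M) →ₗ[k] ⨂[k]^t M),
      (∀ g : G, s ∘ₗ PiTensorProduct.map (fun _ => ρ g)
          = PiTensorProduct.map (fun _ => ρ g) ∘ₗ s) ∧
      (∀ g : G, p ∘ₗ PiTensorProduct.map (fun _ => ρ g)
          = PiTensorProduct.map (fun _ => ρ g) ∘ₗ p) ∧
      p ∘ₗ s = LinearMap.id := by
  induction m with
  | zero => exact ⟨LinearMap.id, LinearMap.id, fun g => by simp, fun g => by simp, by simp⟩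
  | succ m ih =>
    obtain ⟨s, p, hs, hp, hps⟩ := ih
    obtain ⟨s2, p2, hs2, hp2, hps2⟩ := step ρ e he (t + 2*m) (ht.imp (fun h => by omega) id)
    refine ⟨s2 ∘ₗ s, p ∘ₗ p2, fun g => ?_, fun g => ?_, ?_⟩
    · show (s2 ∘ₗ s) ∘ₗ PiTensorProduct.map (fun _ : Fin t => ρ g)
        = PiTensorProduct.map (fun _ : Fin (t + 2*m + 2) => ρ g) ∘ₗ (s2 ∘ₗ s)
      rw [LinearMap.comp_assoc, hs g, ← LinearMap.comp_assoc, hs2 g, LinearMap.comp_assoc]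
    · show (p ∘ₗ p2) ∘ₗ PiTensorProduct.map (fun _ : Fin (t + 2*m + 2) => ρ g)
        = PiTensorProduct.map (fun _ : Fin t => ρ g) ∘ₗ (p ∘ₗ p2)
      rw [LinearMap.comp_assoc, hp2 g, ← LinearMap.comp_assoc, hp g, LinearMap.comp_assoc]
    · show (p ∘ₗ p2) ∘ₗ (s2 ∘ₗ s) = LinearMap.id
      rw [LinearMap.comp_assoc, ← LinearMap.comp_assoc s s2 p2, hps2, LinearMap.id_comp, hps]

end Stmt2Aux

/-- Let `M` be a finite dimensional self-dual representation of a
group `G` over an algebraically closed field `k` (self-dual: there is a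
`G`-equivariant isomorphism `e : M ≃ M*`, where `(g·φ)(v) = φ(g⁻¹ v)`).
Let `0 ≤ t ≤ r` with `r - t` even.  If `t ≥ 1` or `dim M ≠ 0` in `k`, then
`M^{⊗t}` is a direct summand of `M^{⊗r}` as representations of `G` (with the
diagonal action on tensor powers; `M^{⊗0}` is the trivial representation `k`). -/
theorem stmt2 (k : Type*) [Field k] [IsAlgClosed k] (G : Type*) [Group G]
    (M : Type*) [AddCommGroup M] [Module k M] [FiniteDimensional k M]
    (ρ : Representation k G M)
    (e : M ≃ₗ[k] Module.Dual k M)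
    (he : ∀ (g : G) (v : M), e (ρ g v) = (e v) ∘ₗ (ρ g⁻¹))
    (r t : ℕ) (htr : t ≤ r) (heven : Even (r - t))
    (h : 1 ≤ t ∨ (Module.finrank k M : k) ≠ 0) :
    ∃ (ι : (⨂[k]^t M) →ₗ[k] ⨂[k]^r M) (π : (⨂[k]^r M) →ₗ[k] ⨂[k]^t M),
      (∀ (g : G) (x : ⨂[k]^t M),
        ι (PiTensorProduct.map (fun _ => ρ g) x)
          = PiTensorProduct.map (fun _ => ρ g) (ι x)) ∧
      (∀ (g : G) (y : ⨂[k]^r M),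
        π (PiTensorProduct.map (fun _ => ρ g) y)
          = PiTensorProduct.map (fun _ => ρ g) (π y)) ∧
      π.comp ι = LinearMap.id := by
  obtain ⟨m, hm⟩ := heven
  obtain rfl : r = t + 2*m := by omega
  obtain ⟨s, p, hs, hp, hps⟩ := Stmt2Aux.iter ρ e he t h m
  exact ⟨s, p, fun g x => LinearMap.congr_fun (hs g) x,
    fun g y => LinearMap.congr_fun (hp g) y, hps⟩
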